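/- Let z be a positive integer, let d ≥ 1, and let r_1, …, r_ℓ ∈ ℝ^{2d} and w_1, …, w_ℓ ∈ ℝ_{>0}. There exists a unit vector v ∈ ℝ^{2d} such that ∑_{i=1}^ℓ w_i · min_{ξ∈{−1,1}} ‖r_i − ξ·v‖^z ≤ ∑_{i=1}^ℓ w_i·(‖r_i‖² + 1)^{z/2} − 2·min{1, z/2} · (∑_{i=1}^ℓ w_i·(‖r_i‖² + 1)^{z/2 − 1}·‖r_i‖)/√ℓ. -/

import Mathlib

open scoped RealInnerProductSpace

/-- Greedy choice of signs making the signed sum long. -/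
lemma exists_signs_aux {E : Type*} [NormedAddCommGroup E] [InnerProductSpace ℝ E]
    {n : ℕ} (u : Fin n → E) (s : Finset (Fin n)) :
    ∃ ε : Fin n → ℝ, (∀ i, ε i = 1 ∨ ε i = -1) ∧
      ∑ i ∈ s, ‖u i‖ ^ 2 ≤ ‖∑ i ∈ s, ε i • u i‖ ^ 2 := by
  classical
  induction s using Finset.induction_on with
  | empty => exact ⟨fun _ => 1, fun _ => Or.inl rfl, by simp⟩
  | insert _ _ hj ih =>
    rename_i j s
    obtain ⟨ε, hε, hsum⟩ := ih
    set S := ∑ i ∈ s, ε i • u i with hS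
    set c : ℝ := if 0 ≤ ⟪u j, S⟫ then 1 else -1 with hc
    have hc1 : c = 1 ∨ c = -1 := by
      by_cases h : 0 ≤ ⟪u j, S⟫ <;> simp [hc, h]
    have hcin : 0 ≤ c * ⟪u j, S⟫ := by
      by_cases h : 0 ≤ ⟪u j, S⟫
      · simp only [hc, if_pos h, one_mul]; exact h
      · simp only [hc, if_neg h, neg_one_mul]; linarith [lt_of_not_ge h]
    refine ⟨Function.update ε j c, ?_, ?_⟩
    · intro i
      by_cases hij : i = j
      · subst hij; simpa using hc1
      · simpa [Function.update_of_ne hij] using hε i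
    · have hsum_eq : ∑ i ∈ insert j s, Function.update ε j c i • u i = c • u j + S := by
        rw [Finset.sum_insert hj, Function.update_self]
        congr 1
        refine Finset.sum_congr rfl fun i hi => ?_
        rw [Function.update_of_ne (ne_of_mem_of_not_mem hi hj)]
      have hcnorm : ‖c • u j‖ = ‖u j‖ := by
        rcases hc1 with h | h <;> simp [h, norm_smul]
      rw [hsum_eq, Finset.sum_insert hj, norm_add_sq_real, real_inner_smul_left, hcnorm]
      nlinarith [hcin]

/-- The key scalar inequality: `(a - t)^p ≤ a^p - min 1 p * a^(p-1) * t`. -/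
lemma rpow_reduction {a t p : ℝ} (ha : 1 ≤ a) (ht : 0 ≤ t) (hta : t ≤ a)
    (hp : p = 1 / 2 ∨ 1 ≤ p) :
    (a - t) ^ p ≤ a ^ p - min 1 p * (a ^ (p - 1) * t) := by
  have ha0 : (0 : ℝ) < a := lt_of_lt_of_le one_pos ha
  rcases hp with hp | hp
  · subst hp
    have hmin : min (1 : ℝ) (1 / 2) = 1 / 2 := by norm_num
    rw [hmin]
    set b := Real.sqrt a with hb
    have hb0 : 0 < b := Real.sqrt_pos.mpr ha0
    have hb2 : b ^ 2 = a := Real.sq_sqrt ha0.le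
    have hR : 0 ≤ b - 1 / 2 * (b⁻¹ * t) := by
      rw [sub_nonneg]
      rw [div_mul_eq_mul_div, one_mul, div_le_iff₀ (by norm_num : (0:ℝ) < 2)]
      have : b⁻¹ * t ≤ b⁻¹ * a := by
        apply mul_le_mul_of_nonneg_left hta (inv_nonneg.mpr hb0.le)
      calc b⁻¹ * t ≤ b⁻¹ * a := this
        _ = b := by rw [← hb2]; field_simp
        _ ≤ b * 2 := by linarith
    have key : a - t ≤ (b - 1 / 2 * (b⁻¹ * t)) ^ 2 := by
      have h1 : (b - 1 / 2 * (b⁻¹ * t)) ^ 2 = b ^ 2 - t + (t / (2 * b)) ^ 2 := by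
        field_simp
        ring
      rw [h1, hb2]
      nlinarith [sq_nonneg (t / (2 * b))]
    have hle : Real.sqrt (a - t) ≤ b - 1 / 2 * (b⁻¹ * t) := by
      have := Real.sqrt_le_sqrt key
      rwa [Real.sqrt_sq hR] at this
    have e1 : (a - t) ^ ((1:ℝ)/2) = Real.sqrt (a - t) := (Real.sqrt_eq_rpow _).symm
    have e2 : a ^ ((1:ℝ)/2) = b := (Real.sqrt_eq_rpow _).symm
    have e3 : a ^ ((1:ℝ)/2 - 1) = b⁻¹ := by
      rw [show (1:ℝ)/2 - 1 = -(1/2) by norm_num, Real.rpow_neg ha0.le, ← Real.sqrt_eq_rpow]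
    rw [e1, e2, e3]
    linarith [hle]
  · have hp0 : 0 < p := lt_of_lt_of_le one_pos hp
    have hmin : min (1 : ℝ) p = 1 := min_eq_left hp
    rw [hmin, one_mul]
    have hrhs : a ^ (p - 1) * a = a ^ p := by
      rw [← Real.rpow_add_one ha0.ne' (p - 1)]
      norm_num
    rcases eq_or_lt_of_le hta with he | hlt
    · rw [he, sub_self, Real.zero_rpow hp0.ne']
      rw [show a ^ p - a ^ (p - 1) * a = 0 by rw [hrhs]; ring]
    · have hat : 0 < a - t := by linarith
      have h1 : (a - t) ^ p = (a - t) ^ (p - 1) * (a - t) := by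
        rw [← Real.rpow_add_one hat.ne' (p - 1)]
        norm_num
      have h2 : (a - t) ^ (p - 1) ≤ a ^ (p - 1) :=
        Real.rpow_le_rpow hat.le (by linarith) (by linarith)
      calc (a - t) ^ p = (a - t) ^ (p - 1) * (a - t) := h1
        _ ≤ a ^ (p - 1) * (a - t) := mul_le_mul_of_nonneg_right h2 hat.le
        _ = a ^ p - a ^ (p - 1) * t := by rw [mul_sub, hrhs]

/-- Expressing the min over signs as an rpow. -/
lemma min_pow_eq {E : Type*} [NormedAddCommGroup E] [InnerProductSpace ℝ E]
    (v x : E) (hv : ‖v‖ = 1) (z : ℕ) :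
    min (‖x - v‖ ^ z) (‖x + v‖ ^ z) =
      (‖x‖ ^ 2 + 1 - 2 * |⟪x, v⟫|) ^ ((z : ℝ) / 2) := by
  set m := min ‖x - v‖ ‖x + v‖ with hm
  have hm0 : 0 ≤ m := le_min (norm_nonneg _) (norm_nonneg _)
  have hminpow : min (‖x - v‖ ^ z) (‖x + v‖ ^ z) = m ^ z := by
    rcases le_total ‖x - v‖ ‖x + v‖ with h | h
    · rw [hm, min_eq_left h, min_eq_left (pow_le_pow_left₀ (norm_nonneg _) h z)]
    · rw [hm, min_eq_right h, min_eq_right (pow_le_pow_left₀ (norm_nonneg _) h z)]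
  have hsub : ‖x - v‖ ^ 2 = ‖x‖ ^ 2 - 2 * ⟪x, v⟫ + 1 := by
    rw [norm_sub_sq_real, hv]; ring
  have hadd : ‖x + v‖ ^ 2 = ‖x‖ ^ 2 + 2 * ⟪x, v⟫ + 1 := by
    rw [norm_add_sq_real, hv]; ring
  have hm2 : m ^ 2 = ‖x‖ ^ 2 + 1 - 2 * |⟪x, v⟫| := by
    rcases abs_cases (⟪x, v⟫ : ℝ) with ⟨habs, hsign⟩ | ⟨habs, hsign⟩
    · have h : ‖x - v‖ ≤ ‖x + v‖ := by
        rw [← Real.sqrt_sq (norm_nonneg (x - v)), ← Real.sqrt_sq (norm_nonneg (x + v))]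
        apply Real.sqrt_le_sqrt
        rw [hsub, hadd]; linarith
      rw [hm, min_eq_left h, hsub, habs]; ring
    · have h : ‖x + v‖ ≤ ‖x - v‖ := by
        rw [← Real.sqrt_sq (norm_nonneg (x + v)), ← Real.sqrt_sq (norm_nonneg (x - v))]
        apply Real.sqrt_le_sqrt
        rw [hsub, hadd]; linarith
      rw [hm, min_eq_right h, hadd, habs]; ring
  have hrpow : (m ^ 2 : ℝ) ^ ((z : ℝ) / 2) = m ^ z := by
    rw [← Real.rpow_natCast m 2, ← Real.rpow_mul hm0,
      show ((2:ℕ) : ℝ) * ((z : ℝ) / 2) = (z : ℝ) by push_cast; ring, Real.rpow_natCast]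
  rw [hminpow, ← hm2, hrpow]

theorem exists_unit_vector_power_reduction
    (z : ℕ) (hz : 0 < z) (d ℓ : ℕ) (hd : 0 < d)
    (r : Fin ℓ → EuclideanSpace ℝ (Fin (2 * d)))
    (w : Fin ℓ → ℝ) (hw : ∀ i, 0 < w i) :
    ∃ v : EuclideanSpace ℝ (Fin (2 * d)), ‖v‖ = 1 ∧
      ∑ i, w i * min (‖r i - v‖ ^ z) (‖r i - (-1 : ℝ) • v‖ ^ z) ≤
        (∑ i, w i * (‖r i‖ ^ 2 + 1) ^ ((z : ℝ) / 2)) -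
          2 * min 1 ((z : ℝ) / 2) *
            ((∑ i, w i * (‖r i‖ ^ 2 + 1) ^ ((z : ℝ) / 2 - 1) * ‖r i‖) / Real.sqrt ℓ) := by
  classical
  set p : ℝ := (z : ℝ) / 2 with hp
  have hp0 : 0 < p := by positivity
  have hpcase : p = 1 / 2 ∨ 1 ≤ p := by
    rcases Nat.lt_or_ge z 2 with h | h
    · left
      interval_cases z
      norm_num [hp]
    · right
      rw [hp, le_div_iff₀ (by norm_num : (0:ℝ) < 2), one_mul]
      exact_mod_cast h
  -- abbreviations
  set c : Fin ℓ → ℝ := fun i => w i * (‖r i‖ ^ 2 + 1) ^ (p - 1) with hcdef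
  have hc0 : ∀ i, 0 < c i := fun i => by
    have : (0:ℝ) < (‖r i‖ ^ 2 + 1) ^ (p - 1) :=
      Real.rpow_pos_of_pos (by positivity) _
    exact mul_pos (hw i) this
  set u : Fin ℓ → EuclideanSpace ℝ (Fin (2 * d)) := fun i => c i • r i with hudef
  have hunorm : ∀ i, ‖u i‖ = c i * ‖r i‖ := fun i => by
    rw [hudef]; simp [norm_smul, abs_of_pos (hc0 i)]
  -- key: exists unit v with (∑ c i * ‖r i‖)/√ℓ ≤ ∑ c i * |⟪r i, v⟫|
  have hmain : ∃ v : EuclideanSpace ℝ (Fin (2 * d)), ‖v‖ = 1 ∧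
      (∑ i, c i * ‖r i‖) / Real.sqrt ℓ ≤ ∑ i, c i * |⟪r i, v⟫| := by
    obtain ⟨ε, hε, hsum⟩ := exists_signs_aux u Finset.univ
    set S := ∑ i, ε i • u i with hS
    by_cases hS0 : S = 0
    · -- all u i = 0, so the left side is 0
      have hz2d : 0 < 2 * d := by omega
      refine ⟨EuclideanSpace.single ⟨0, hz2d⟩ 1, by simp, ?_⟩
      have hall : ∀ i, ‖u i‖ = 0 := by
        intro i
        have h0 : ∑ i, ‖u i‖ ^ 2 ≤ 0 := by
          simpa [hS0] using hsum
        by_contra hne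
        have h1 : 0 < ‖u i‖ ^ 2 := by positivity
        have h2 : (0:ℝ) ≤ ∑ j ∈ Finset.univ.erase i, ‖u j‖ ^ 2 :=
          Finset.sum_nonneg fun j _ => by positivity
        rw [← Finset.add_sum_erase _ _ (Finset.mem_univ i)] at h0
        linarith
      have : ∑ i, c i * ‖r i‖ = 0 := by
        refine Finset.sum_eq_zero fun i _ => ?_
        rw [← hunorm i, hall i]
      rw [this, zero_div]
      exact Finset.sum_nonneg fun i _ =>
        mul_nonneg (hc0 i).le (abs_nonneg _)
    · have hSnorm : 0 < ‖S‖ := norm_pos_iff.mpr hS0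
      refine ⟨‖S‖⁻¹ • S, by simp [norm_smul, inv_mul_cancel₀ hSnorm.ne'], ?_⟩
      set v := ‖S‖⁻¹ • S with hv
      have hl0 : 0 < ℓ := by
        by_contra h
        have : ℓ = 0 := by omega
        subst this
        exact hS0 (by simp [hS])
      -- ⟪S, v⟫ = ‖S‖
      have hSv : ⟪S, v⟫ = ‖S‖ := by
        rw [hv, real_inner_smul_right, real_inner_self_eq_norm_sq, sq, ← mul_assoc,
          inv_mul_cancel₀ hSnorm.ne', one_mul]
      -- ∑ c i * |⟪r i, v⟫| ≥ ⟪S, v⟫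
      have h1 : ‖S‖ ≤ ∑ i, c i * |⟪r i, v⟫| := by
        rw [← hSv, hS, sum_inner]
        refine Finset.sum_le_sum fun i _ => ?_
        rw [hudef]
        simp only [real_inner_smul_left]
        rcases hε i with h | h
        · rw [h, one_mul]
          exact mul_le_mul_of_nonneg_left (le_abs_self _) (hc0 i).le
        · rw [h]
          calc (-1 : ℝ) * (c i * ⟪r i, v⟫) = c i * (-⟪r i, v⟫) := by ring
            _ ≤ c i * |⟪r i, v⟫| :=
              mul_le_mul_of_nonneg_left (neg_le_abs _) (hc0 i).le
      -- Cauchy–Schwarz: ∑ ‖u i‖ ≤ √ℓ * ‖S‖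
      have h2 : ∑ i, ‖u i‖ ≤ Real.sqrt ℓ * ‖S‖ := by
        have hcs : (∑ i, ‖u i‖) ^ 2 ≤ (ℓ : ℝ) * ∑ i, ‖u i‖ ^ 2 := by
          have := sq_sum_le_card_mul_sum_sq (s := Finset.univ) (f := fun i => ‖u i‖)
          simpa using this
        have h3 : (∑ i, ‖u i‖) ^ 2 ≤ (ℓ : ℝ) * ‖S‖ ^ 2 := by
          calc (∑ i, ‖u i‖) ^ 2 ≤ (ℓ : ℝ) * ∑ i, ‖u i‖ ^ 2 := hcs
            _ ≤ (ℓ : ℝ) * ‖S‖ ^ 2 :=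
              mul_le_mul_of_nonneg_left hsum (Nat.cast_nonneg _)
        have h4 : (0:ℝ) ≤ ∑ i, ‖u i‖ := Finset.sum_nonneg fun i _ => norm_nonneg _
        have h5 : (Real.sqrt ℓ * ‖S‖) ^ 2 = (ℓ : ℝ) * ‖S‖ ^ 2 := by
          rw [mul_pow, Real.sq_sqrt (Nat.cast_nonneg _)]
        calc ∑ i, ‖u i‖ = Real.sqrt ((∑ i, ‖u i‖) ^ 2) := (Real.sqrt_sq h4).symm
          _ ≤ Real.sqrt ((Real.sqrt ℓ * ‖S‖) ^ 2) :=
            Real.sqrt_le_sqrt (h3.trans_eq h5.symm)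
          _ = Real.sqrt ℓ * ‖S‖ := Real.sqrt_sq (by positivity)
      have hsqrtl : 0 < Real.sqrt ℓ := Real.sqrt_pos.mpr (by exact_mod_cast hl0)
      rw [div_le_iff₀ hsqrtl]
      have heq : ∑ i, c i * ‖r i‖ = ∑ i, ‖u i‖ :=
        Finset.sum_congr rfl fun i _ => (hunorm i).symm
      rw [heq]
      calc ∑ i, ‖u i‖ ≤ Real.sqrt ℓ * ‖S‖ := h2
        _ ≤ (∑ i, c i * |⟪r i, v⟫|) * Real.sqrt ℓ := by
            rw [mul_comm]
            exact mul_le_mul_of_nonneg_right h1 hsqrtl.le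
  obtain ⟨v, hv1, hvmain⟩ := hmain
  refine ⟨v, hv1, ?_⟩
  -- pointwise bound
  have hpoint : ∀ i, w i * min (‖r i - v‖ ^ z) (‖r i - (-1 : ℝ) • v‖ ^ z) ≤
      w i * (‖r i‖ ^ 2 + 1) ^ p - 2 * min 1 p * (c i * |⟪r i, v⟫|) := by
    intro i
    have hrw : r i - (-1 : ℝ) • v = r i + v := by
      rw [neg_one_smul, sub_neg_eq_add]
    rw [hrw, min_pow_eq v (r i) hv1 z]
    have ha : (1:ℝ) ≤ ‖r i‖ ^ 2 + 1 := by nlinarith [sq_nonneg ‖r i‖]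
    have ht : (0:ℝ) ≤ 2 * |⟪r i, v⟫| := by
      have := abs_nonneg (⟪r i, v⟫ : ℝ); linarith
    have hinner : |⟪r i, v⟫| ≤ ‖r i‖ := by
      calc |⟪r i, v⟫| ≤ ‖r i‖ * ‖v‖ := abs_real_inner_le_norm _ _
        _ = ‖r i‖ := by rw [hv1, mul_one]
    have hta : 2 * |⟪r i, v⟫| ≤ ‖r i‖ ^ 2 + 1 := by nlinarith [sq_nonneg (‖r i‖ - 1)]
    have := rpow_reduction ha ht hta hpcase
    have h2 : (‖r i‖ ^ 2 + 1 - 2 * |⟪r i, v⟫|) ^ p ≤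
        (‖r i‖ ^ 2 + 1) ^ p - min 1 p * ((‖r i‖ ^ 2 + 1) ^ (p - 1) * (2 * |⟪r i, v⟫|)) := this
    have h3 := mul_le_mul_of_nonneg_left h2 (hw i).le
    calc w i * (‖r i‖ ^ 2 + 1 - 2 * |⟪r i, v⟫|) ^ p
        ≤ w i * ((‖r i‖ ^ 2 + 1) ^ p -
            min 1 p * ((‖r i‖ ^ 2 + 1) ^ (p - 1) * (2 * |⟪r i, v⟫|))) := h3
      _ = w i * (‖r i‖ ^ 2 + 1) ^ p - 2 * min 1 p * (c i * |⟪r i, v⟫|) := by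
          rw [hcdef]; ring
  calc ∑ i, w i * min (‖r i - v‖ ^ z) (‖r i - (-1 : ℝ) • v‖ ^ z)
      ≤ ∑ i, (w i * (‖r i‖ ^ 2 + 1) ^ p - 2 * min 1 p * (c i * |⟪r i, v⟫|)) :=
        Finset.sum_le_sum fun i _ => hpoint i
    _ = (∑ i, w i * (‖r i‖ ^ 2 + 1) ^ p) -
          2 * min 1 p * ∑ i, c i * |⟪r i, v⟫| := by
        rw [Finset.sum_sub_distrib, ← Finset.mul_sum]
    _ ≤ (∑ i, w i * (‖r i‖ ^ 2 + 1) ^ p) -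
          2 * min 1 p * ((∑ i, c i * ‖r i‖) / Real.sqrt ℓ) := by
        have h2min : (0:ℝ) ≤ 2 * min 1 p := by
          have : (0:ℝ) < min 1 p := lt_min one_pos hp0
          linarith
        exact sub_le_sub_left (mul_le_mul_of_nonneg_left hvmain h2min) _
    _ = (∑ i, w i * (‖r i‖ ^ 2 + 1) ^ ((z : ℝ) / 2)) -
          2 * min 1 ((z : ℝ) / 2) *
            ((∑ i, w i * (‖r i‖ ^ 2 + 1) ^ ((z : ℝ) / 2 - 1) * ‖r i‖) / Real.sqrt ℓ) := by
        rfl
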